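/- For every ℓ ≥ 2 and any two distinct vectors x, y ∈ {0,1}^n, the single-deletion balls of their ℓ-read vectors intersect in at most one element: |D(Tr(x)) ∩ D(Tr(y))| ≤ 1. Consequently, any x ∈ {0,1}^n is uniquely determined by any two distinct elements of D(Tr(x)). -/

import Mathlib

/-- The ℓ-read vector of a binary vector `x` (as a list of Booleans): its entry at 0-based
index `i` (1-indexed `i+1`) is the Hamming weight of the window of `ℓ` consecutive
coordinates of `x` ending at 1-indexed position `i+1`, with out-of-range coordinates taken
to be `0` (`false`). -/
def readVec (ℓ : ℕ) (x : List Bool) : List ℕ :=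
  (List.range (x.length + ℓ - 1)).map fun i =>
    (((List.replicate (ℓ - 1) false ++ x ++ List.replicate (ℓ - 1) false).drop i).take ℓ).count true

/-- The single-deletion ball: all vectors obtained from `u` by deleting exactly one symbol. -/
def delBall {α : Type*} (u : List α) : Set (List α) :=
  { v | ∃ i < u.length, v = u.eraseIdx i }

/-! ### Auxiliary development -/

/-- Indicator of coordinate `j` (over ℤ) of the binary word `x`. -/
def xf (x : List Bool) (j : ℤ) : ℤ :=
  if 0 ≤ j ∧ x.getD j.toNat false then 1 else 0

/-- Window sum: the "ideal" value of the `ℓ`-read vector at integer position `k`. -/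
def ws (ℓ : ℕ) (x : List Bool) (k : ℤ) : ℤ :=
  ∑ t ∈ Finset.range ℓ, xf x (k + t + 1 - ℓ)

lemma xf_cases (x : List Bool) (j : ℤ) : xf x j = 0 ∨ xf x j = 1 := by
  unfold xf; split <;> simp

lemma xf_of_neg (x : List Bool) {j : ℤ} (hj : j < 0) : xf x j = 0 := by
  unfold xf; rw [if_neg]; rintro ⟨h, -⟩; omega

lemma xf_of_ge (x : List Bool) {j : ℤ} (hj : (x.length : ℤ) ≤ j) : xf x j = 0 := by
  unfold xf; rw [if_neg]
  rintro ⟨h0, hx⟩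
  rw [List.getD_eq_default] at hx
  · exact Bool.false_ne_true hx
  · omega

lemma ws_of_neg (ℓ : ℕ) (x : List Bool) {k : ℤ} (hk : k < 0) : ws ℓ x k = 0 := by
  unfold ws
  refine Finset.sum_eq_zero fun t ht => xf_of_neg x ?_
  rw [Finset.mem_range] at ht
  omega

lemma ws_of_ge (ℓ : ℕ) (x : List Bool) {k : ℤ} (hk : (x.length : ℤ) + ℓ - 1 ≤ k) :
    ws ℓ x k = 0 := by
  unfold ws
  refine Finset.sum_eq_zero fun t ht => xf_of_ge x ?_
  rw [Finset.mem_range] at ht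
  omega

lemma ws_sub (ℓ : ℕ) (x : List Bool) (k : ℤ) :
    ws ℓ x (k + 1) - ws ℓ x k = xf x (k + 1) - xf x (k + 1 - ℓ) := by
  have h1 : ws ℓ x (k + 1) = ∑ t ∈ Finset.range ℓ, xf x (k + (t + 1 : ℕ) + 1 - ℓ) := by
    unfold ws
    refine Finset.sum_congr rfl fun t _ => ?_
    congr 1
    push_cast
    ring
  have h2 : ∑ t ∈ Finset.range (ℓ + 1), xf x (k + t + 1 - ℓ)
      = ∑ t ∈ Finset.range ℓ, xf x (k + (t + 1 : ℕ) + 1 - ℓ) + xf x (k + (0 : ℕ) + 1 - ℓ) :=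
    Finset.sum_range_succ' _ _
  have h3 : ∑ t ∈ Finset.range (ℓ + 1), xf x (k + t + 1 - ℓ)
      = ws ℓ x k + xf x (k + (ℓ : ℕ) + 1 - ℓ) := Finset.sum_range_succ _ _
  rw [h1]
  have e1 : k + (ℓ : ℕ) + 1 - ℓ = k + 1 := by push_cast; ring
  have e2 : k + ((0 : ℕ) : ℤ) + 1 - ℓ = k + 1 - ℓ := by push_cast; ring
  rw [e1] at h3; rw [e2] at h2
  omega

lemma count_take_drop (P : List Bool) :
    ∀ (L i : ℕ), ((P.drop i).take L).count true
      = ∑ t ∈ Finset.range L, (if P.getD (i + t) false then 1 else 0) := by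
  intro L
  induction L with
  | zero => simp
  | succ L ih =>
    intro i
    rcases h : P.drop i with - | ⟨c, rest⟩
    · have hlen : P.length ≤ i := List.drop_eq_nil_iff.mp h
      rw [List.take_nil]
      have : ∀ t ∈ Finset.range (L + 1), (if P.getD (i + t) false then 1 else 0) = 0 := by
        intro t _
        rw [List.getD_eq_default _ _ (by omega)]
        simp
      rw [Finset.sum_congr rfl this]
      simp
    · have hrest : rest = P.drop (i + 1) := by
        rw [← List.tail_drop, h]; rfl
      have hc : P.getD i false = c := by
        have h0 : P[i]? = some c := by
          have h2 := List.getElem?_drop (xs := P) (i := i) (j := 0)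
          rw [h, List.getElem?_cons_zero, Nat.add_zero] at h2
          exact h2.symm
        simp [List.getD_eq_getElem?_getD, h0]
      rw [List.take_succ_cons, List.count_cons, hrest, ih (i + 1),
        Finset.sum_range_succ' (fun t => if P.getD (i + t) false then (1 : ℕ) else 0) L]
      have he : ∀ t ∈ Finset.range L,
          (if P.getD (i + (t + 1)) false then (1 : ℕ) else 0)
            = (if P.getD (i + 1 + t) false then (1 : ℕ) else 0) := by
        intro t _
        rw [show i + (t + 1) = i + 1 + t by omega]
      rw [Finset.sum_congr rfl he]
      simp only [Nat.add_zero]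
      cases c <;> simp [← List.getD_eq_getElem?_getD, hc]

lemma getD_append_replicate_false (x : List Bool) (r s : ℕ) :
    (x ++ List.replicate r false).getD s false = x.getD s false := by
  rcases lt_or_ge s x.length with h | h
  · exact List.getD_append _ _ _ _ h
  · rw [List.getD_append_right _ _ _ _ h, List.getD_eq_default _ _ h]
    rcases lt_or_ge (s - x.length) r with h2 | h2
    · rw [List.getD_eq_getElem _ _ (by simpa using h2), List.getElem_replicate]
    · rw [List.getD_eq_default _ _ (by simpa using h2)]

lemma length_readVec (ℓ : ℕ) (x : List Bool) :
    (readVec ℓ x).length = x.length + ℓ - 1 := by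
  simp [readVec]

lemma readVec_getElem (ℓ : ℕ) (hℓ : 2 ≤ ℓ) (x : List Bool) (i : ℕ)
    (hi : i < (readVec ℓ x).length) :
    ((readVec ℓ x)[i] : ℤ) = ws ℓ x i := by
  have h1 : (readVec ℓ x)[i]
      = (((List.replicate (ℓ - 1) false ++ x ++ List.replicate (ℓ - 1) false).drop i).take
          ℓ).count true := by
    simp [readVec]
  rw [h1, count_take_drop]
  rw [ws]
  rw [Nat.cast_sum]
  refine Finset.sum_congr rfl fun t ht => ?_
  rw [List.append_assoc]
  rcases lt_or_ge (i + t) (ℓ - 1) with h | h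
  · rw [List.getD_append _ _ _ _ (by simpa using h)]
    rw [List.getD_eq_getElem _ _ (by simpa using h), List.getElem_replicate]
    rw [xf_of_neg x (by push_cast; omega)]
    simp
  · rw [List.getD_append_right _ _ _ _ (by simpa using h)]
    rw [getD_append_replicate_false]
    have hlen : (List.replicate (ℓ - 1) false).length = ℓ - 1 := by simp
    rw [hlen]
    have h0 : (0 : ℤ) ≤ (i : ℤ) + t + 1 - ℓ := by omega
    have htn : ((i : ℤ) + t + 1 - ℓ).toNat = i + t - (ℓ - 1) := by omega
    unfold xf
    rw [htn]
    by_cases hb : x.getD (i + t - (ℓ - 1)) false = true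
    · rw [if_pos hb, if_pos ⟨h0, hb⟩]
      norm_num
    · rw [if_neg hb, if_neg (by tauto)]
      norm_num

/-- If the window sums agree strictly below `a`, the words agree strictly below `a`. -/
lemma eq_of_lt_of_ws_lt {ℓ : ℕ} (hℓ : 1 ≤ ℓ) {x y : List Bool} {a : ℤ}
    (h : ∀ k : ℤ, k < a → ws ℓ x k = ws ℓ y k) :
    ∀ j : ℤ, j < a → xf x j = xf y j := by
  suffices H : ∀ t : ℕ, ∀ j : ℤ, j.toNat ≤ t → j < a → xf x j = xf y j by
    exact fun j hj => H j.toNat j le_rfl hj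
  intro t
  induction t using Nat.strong_induction_on with
  | _ t ih =>
    intro j hjt hja
    rcases lt_or_ge j 0 with hj0 | hj0
    · rw [xf_of_neg x hj0, xf_of_neg y hj0]
    · have hx := ws_sub ℓ x (j - 1)
      have hy := ws_sub ℓ y (j - 1)
      rw [show j - 1 + 1 = j by ring] at hx hy
      have h1 := h j hja
      have h2 := h (j - 1) (by omega)
      have h3 : xf x (j - ℓ) = xf y (j - ℓ) := by
        rcases lt_or_ge (j - ℓ) 0 with hneg | hpos
        · rw [xf_of_neg x hneg, xf_of_neg y hneg]
        · rcases Nat.eq_zero_or_pos t with rfl | ht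
          · omega
          · exact ih (t - 1) (by omega) (j - ℓ) (by omega) (by omega)
      omega

/-- If the window sums agree strictly above `b`, the words agree from `b - ℓ + 2` on. -/
lemma eq_of_ge_of_ws_gt {ℓ : ℕ} (hℓ : 1 ≤ ℓ) {x y : List Bool} (hlen : x.length = y.length)
    {b : ℤ} (h : ∀ k : ℤ, b < k → ws ℓ x k = ws ℓ y k) :
    ∀ j : ℤ, b - ℓ + 2 ≤ j → xf x j = xf y j := by
  suffices H : ∀ t : ℕ, ∀ j : ℤ, ((x.length : ℤ) - j).toNat ≤ t → b - ℓ + 2 ≤ j →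
      xf x j = xf y j by
    exact fun j hj => H ((x.length : ℤ) - j).toNat j le_rfl hj
  intro t
  induction t using Nat.strong_induction_on with
  | _ t ih =>
    intro j hjt hjb
    rcases le_or_gt (x.length : ℤ) j with hge | hlt
    · rw [xf_of_ge x hge, xf_of_ge y (by omega)]
    · have hx := ws_sub ℓ x (j + ℓ - 1)
      have hy := ws_sub ℓ y (j + ℓ - 1)
      rw [show j + ℓ - 1 + 1 = j + ℓ by ring, show j + ℓ - ℓ = j by ring] at hx hy
      have h1 := h (j + ℓ) (by omega)
      have h2 := h (j + ℓ - 1) (by omega)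
      have h3 : xf x (j + ℓ) = xf y (j + ℓ) := by
        rcases Nat.eq_zero_or_pos t with rfl | ht
        · omega
        · exact ih (t - 1) (by omega) (j + ℓ) (by omega) (by omega)
      omega

/-- Existence of extreme disagreement positions. -/
lemma exists_pq {x y : List Bool} (hlen : x.length = y.length) (hne : x ≠ y) :
    ∃ p q : ℤ, xf x p ≠ xf y p ∧ xf x q ≠ xf y q ∧
      (∀ j : ℤ, xf x j ≠ xf y j → p ≤ j ∧ j ≤ q) := by
  classical
  set S : Finset ℤ := (Finset.Icc 0 (x.length : ℤ)).filter (fun j => xf x j ≠ xf y j) with hS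
  have hmem : ∀ j : ℤ, xf x j ≠ xf y j → j ∈ S := by
    intro j hj
    rw [hS, Finset.mem_filter, Finset.mem_Icc]
    refine ⟨⟨?_, ?_⟩, hj⟩
    · by_contra h0
      exact hj (by rw [xf_of_neg x (by omega), xf_of_neg y (by omega)])
    · by_contra h0
      exact hj (by rw [xf_of_ge x (by omega), xf_of_ge y (by omega)])
  have hne' : S.Nonempty := by
    by_contra hemp
    rw [Finset.not_nonempty_iff_eq_empty] at hemp
    apply hne
    apply List.ext_getElem hlen
    intro i h1 h2
    have hd : xf x i = xf y i := by
      by_contra hd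
      have := hmem i hd
      rw [hemp] at this
      exact absurd this (Finset.notMem_empty _)
    unfold xf at hd
    rw [Int.toNat_natCast] at hd
    rw [List.getD_eq_getElem _ _ h1, List.getD_eq_getElem _ _ h2] at hd
    have h0 : (0 : ℤ) ≤ (i : ℤ) := by positivity
    rcases Bool.eq_false_or_eq_true x[i] with hx | hx <;>
      rcases Bool.eq_false_or_eq_true y[i] with hy | hy <;>
        simp [hx, hy] at hd ⊢
  refine ⟨S.min' hne', S.max' hne', ?_, ?_, ?_⟩
  · exact (Finset.mem_filter.mp (S.min'_mem hne')).2
  · exact (Finset.mem_filter.mp (S.max'_mem hne')).2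
  · intro j hj
    exact ⟨S.min'_le j (hmem j hj), S.le_max' j (hmem j hj)⟩

/-- The relation extracted from `u.eraseIdx a = v.eraseIdx b` (with `a ≤ b`). -/
def fwd (ℓ : ℕ) (x y : List Bool) (a b : ℤ) : Prop :=
  (∀ k : ℤ, k < a → ws ℓ x k = ws ℓ y k) ∧
  (∀ k : ℤ, a ≤ k → k < b → ws ℓ x (k + 1) = ws ℓ y k) ∧
  (∀ k : ℤ, b < k → ws ℓ x k = ws ℓ y k)

lemma F_sum (ℓ : ℕ) (x y : List Bool) (k : ℤ) :
    ws ℓ x k - ws ℓ y k = ∑ t ∈ Finset.range ℓ, (xf x (k + t + 1 - ℓ) - xf y (k + t + 1 - ℓ)) := by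
  rw [ws, ws, ← Finset.sum_sub_distrib]

lemma F_eq_zero_lo {ℓ : ℕ} {x y : List Bool} {p k : ℤ}
    (hmin : ∀ j : ℤ, xf x j ≠ xf y j → p ≤ j) (hk : k < p) :
    ws ℓ x k = ws ℓ y k := by
  have h := F_sum ℓ x y k
  rw [Finset.sum_eq_zero (fun t ht => ?_)] at h
  · omega
  · rw [Finset.mem_range] at ht
    have : xf x (k + t + 1 - ℓ) = xf y (k + t + 1 - ℓ) := by
      by_contra hc
      have := hmin _ hc
      omega
    omega

lemma F_eq_zero_hi {ℓ : ℕ} {x y : List Bool} {q k : ℤ}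
    (hmax : ∀ j : ℤ, xf x j ≠ xf y j → j ≤ q) (hk : q + ℓ - 1 < k) :
    ws ℓ x k = ws ℓ y k := by
  have h := F_sum ℓ x y k
  rw [Finset.sum_eq_zero (fun t ht => ?_)] at h
  · omega
  · rw [Finset.mem_range] at ht
    have : xf x (k + t + 1 - ℓ) = xf y (k + t + 1 - ℓ) := by
      by_contra hc
      have := hmax _ hc
      omega
    omega

lemma F_single_lo {ℓ : ℕ} (hℓ : 1 ≤ ℓ) {x y : List Bool} {p : ℤ}
    (hmin : ∀ j : ℤ, xf x j ≠ xf y j → p ≤ j) :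
    ws ℓ x p - ws ℓ y p = xf x p - xf y p := by
  rw [F_sum]
  rw [Finset.sum_eq_single_of_mem (ℓ - 1) (Finset.mem_range.mpr (by omega))
    (fun t ht hne => ?_)]
  · congr 2 <;> · congr 1; push_cast; omega
  · rw [Finset.mem_range] at ht
    have : xf x (p + t + 1 - ℓ) = xf y (p + t + 1 - ℓ) := by
      by_contra hc
      have := hmin _ hc
      omega
    omega

lemma F_single_hi {ℓ : ℕ} (hℓ : 1 ≤ ℓ) {x y : List Bool} {q : ℤ}
    (hmax : ∀ j : ℤ, xf x j ≠ xf y j → j ≤ q) :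
    ws ℓ x (q + ℓ - 1) - ws ℓ y (q + ℓ - 1) = xf x q - xf y q := by
  rw [F_sum]
  rw [Finset.sum_eq_single_of_mem 0 (Finset.mem_range.mpr (by omega))
    (fun t ht hne => ?_)]
  · congr 2 <;> · congr 1; push_cast; omega
  · rw [Finset.mem_range] at ht
    have : xf x (q + ℓ - 1 + t + 1 - ℓ) = xf y (q + ℓ - 1 + t + 1 - ℓ) := by
      by_contra hc
      have := hmax _ hc
      omega
    omega

/-- Degenerate case: the window sums agree everywhere except possibly at one point. -/
lemma deg {ℓ : ℕ} (hℓ : 2 ≤ ℓ) {x y : List Bool} (hlen : x.length = y.length) (hne : x ≠ y)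
    {a : ℤ} (h : ∀ k : ℤ, k ≠ a → ws ℓ x k = ws ℓ y k) : False := by
  obtain ⟨p, q, hp, hq, hpq⟩ := exists_pq hlen hne
  have hmin : ∀ j : ℤ, xf x j ≠ xf y j → p ≤ j := fun j hj => (hpq j hj).1
  have hmax : ∀ j : ℤ, xf x j ≠ xf y j → j ≤ q := fun j hj => (hpq j hj).2
  have h1 : ws ℓ x p - ws ℓ y p = xf x p - xf y p := F_single_lo (by omega) hmin
  have h2 : ws ℓ x (q + ℓ - 1) - ws ℓ y (q + ℓ - 1) = xf x q - xf y q := F_single_hi (by omega) hmax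
  have hpa : p = a := by
    by_contra hc
    have := h p hc
    omega
  have hqa : q + ℓ - 1 = a := by
    by_contra hc
    have := h _ hc
    omega
  have hple : p ≤ q := hmin q hq
  omega

/-- Forward–forward: the window word is constant on `[a, a')`. -/
lemma ffcore {ℓ : ℕ} (hℓ : 2 ≤ ℓ) {x y : List Bool} (hlen : x.length = y.length) (hne : x ≠ y)
    {a b a' b' : ℤ} (h1 : fwd ℓ x y a b) (h2 : fwd ℓ x y a' b') :
    ∀ k : ℤ, a ≤ k → k < a' → ws ℓ x (k + 1) = ws ℓ x k := by
  intro k hka hka'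
  obtain ⟨p, q, hp, hq, hpq⟩ := exists_pq hlen hne
  have hpa' : a' ≤ p := by
    by_contra hc
    exact hp (eq_of_lt_of_ws_lt (by omega) h2.1 p (by omega))
  have hpb : p ≤ b - ℓ + 1 := by
    by_contra hc
    exact hp (eq_of_ge_of_ws_gt (by omega) hlen h1.2.2 p (by omega))
  have e1 := h1.2.1 k hka (by omega)
  have e2 := h2.1 k (by omega)
  omega

/-- Forward–backward: impossible. -/
lemma fb {ℓ : ℕ} (hℓ : 2 ≤ ℓ) {x y : List Bool} (hlen : x.length = y.length) (hne : x ≠ y)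
    {a b a' b' : ℤ} (hab : a ≤ b) (hba : b' ≤ a')
    (h1 : fwd ℓ x y a b) (h2 : fwd ℓ y x b' a') : False := by
  obtain ⟨p, q, hp, hq, hpq⟩ := exists_pq hlen hne
  have hmin : ∀ j : ℤ, xf x j ≠ xf y j → p ≤ j := fun j hj => (hpq j hj).1
  have hmax : ∀ j : ℤ, xf x j ≠ xf y j → j ≤ q := fun j hj => (hpq j hj).2
  -- dispose of degenerate cases
  rcases eq_or_lt_of_le hab with rfl | hab'
  · exact deg hℓ hlen hne (fun k hk => by
      rcases lt_or_gt_of_ne hk with h | h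
      exacts [h1.1 k h, h1.2.2 k h])
  rcases eq_or_lt_of_le hba with rfl | hba'
  · exact deg hℓ hlen.symm hne.symm (fun k hk => by
      rcases lt_or_gt_of_ne hk with h | h
      exacts [h2.1 k h, h2.2.2 k h])
  -- boundary facts
  have hpa : a ≤ p := by
    by_contra hc
    exact hp (eq_of_lt_of_ws_lt (by omega) h1.1 p (by omega))
  have hpb' : b' ≤ p := by
    by_contra hc
    exact hp (eq_of_lt_of_ws_lt (by omega) h2.1 p (by omega)).symm
  have hqb : q ≤ b - ℓ + 1 := by
    by_contra hc
    exact hq (eq_of_ge_of_ws_gt (by omega) hlen h1.2.2 q (by omega))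
  have hqa' : q ≤ a' - ℓ + 1 := by
    by_contra hc
    exact hq (eq_of_ge_of_ws_gt (by omega) hlen.symm h2.2.2 q (by omega)).symm
  have hple : p ≤ q := hmin q hq
  set N : ℤ := min b a' with hN
  -- alternation of F on [max a b', min b a')
  have alt : ∀ k : ℤ, max a b' ≤ k → k < N →
      ws ℓ x (k + 1) - ws ℓ y (k + 1) = -(ws ℓ x k - ws ℓ y k) := by
    intro k hk1 hk2
    have e1 := h1.2.1 k (by omega) (by omega)
    have e2 := h2.2.1 k (by omega) (by omega)
    omega
  -- |F| is constant going up from p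
  have Fp : ws ℓ x p - ws ℓ y p = xf x p - xf y p := F_single_lo (by omega) hmin
  have CL : ∀ t : ℕ, p + t ≤ N →
      ws ℓ x (p + t) - ws ℓ y (p + t) = xf x p - xf y p ∨
      ws ℓ x (p + t) - ws ℓ y (p + t) = -(xf x p - xf y p) := by
    intro t
    induction t with
    | zero => intro _; left; simpa using Fp
    | succ t ih =>
      intro ht
      have h1t := ih (by push_cast at ht ⊢; omega)
      have halt := alt (p + t) (by push_cast; omega) (by push_cast at ht ⊢; omega)
      rw [show ((p : ℤ) + (t + 1 : ℕ)) = (p + t) + 1 by push_cast; ring]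
      omega
  have hpN : p ≤ N := by omega
  have FN : ws ℓ x N - ws ℓ y N = xf x p - xf y p ∨
      ws ℓ x N - ws ℓ y N = -(xf x p - xf y p) := by
    have := CL (N - p).toNat (by omega)
    rw [show ((p : ℤ) + ((N - p).toNat : ℤ)) = N by omega] at this
    exact this
  have hgp : xf x p - xf y p ≠ 0 := by omega
  -- hence N ≤ q + ℓ - 1, so q = N - ℓ + 1
  have hqN : q = N - ℓ + 1 := by
    by_contra hc
    have : q + ℓ - 1 < N := by omega
    have := F_eq_zero_hi (ℓ := ℓ) hmax this
    omega
  have FN1 : ws ℓ x (N - 1) - ws ℓ y (N - 1) = xf x p - xf y p ∨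
      ws ℓ x (N - 1) - ws ℓ y (N - 1) = -(xf x p - xf y p) := by
    have := CL (N - 1 - p).toNat (by omega)
    rw [show ((p : ℤ) + ((N - 1 - p).toNat : ℤ)) = N - 1 by omega] at this
    exact this
  have haltN := alt (N - 1) (by omega) (by omega)
  rw [show (N - 1 + 1 : ℤ) = N by ring] at haltN
  -- window difference at N
  have hwx := ws_sub ℓ x (N - 1)
  have hwy := ws_sub ℓ y (N - 1)
  rw [show (N - 1 + 1 : ℤ) = N by ring] at hwx hwy
  -- values are 0/1
  have c1 := xf_cases x p
  have c2 := xf_cases y p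
  have c3 := xf_cases x N
  have c4 := xf_cases y N
  have c5 := xf_cases x (N - ℓ)
  have c6 := xf_cases y (N - ℓ)
  have hgN : xf x N ≠ xf y N := by omega
  have := hmax N hgN
  omega

lemma readVec_getElem' {ℓ : ℕ} (hℓ : 2 ≤ ℓ) (x : List Bool) {i : ℕ}
    (hi : i < (readVec ℓ x).length) :
    (readVec ℓ x)[i]? = some (readVec ℓ x)[i] := List.getElem?_eq_getElem hi

/-- Extraction of the `fwd` relation from an equality of deletions. -/
lemma extract {ℓ : ℕ} (hℓ : 2 ≤ ℓ) {x y : List Bool} (hlen : x.length = y.length)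
    {a b : ℕ} (hab : a ≤ b) (hb : b < (readVec ℓ x).length)
    (hz : (readVec ℓ x).eraseIdx a = (readVec ℓ y).eraseIdx b) :
    fwd ℓ x y a b := by
  set u := readVec ℓ x with hu
  set v := readVec ℓ y with hv
  have hul : u.length = x.length + ℓ - 1 := length_readVec ℓ x
  have hvl : v.length = x.length + ℓ - 1 := by rw [hv, length_readVec, hlen]
  have hm : b < u.length := hb
  have hm2 : b < x.length + ℓ - 1 := by rw [← hul]; exact hm
  have H : ∀ kn : ℕ, (u.eraseIdx a)[kn]? = (v.eraseIdx b)[kn]? := fun kn => by rw [hz]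
  have bridge_x : ∀ (kn : ℕ) (h : kn < u.length), (u[kn]'h : ℤ) = ws ℓ x kn :=
    fun kn h => readVec_getElem ℓ hℓ x kn h
  have bridge_y : ∀ (kn : ℕ) (h : kn < v.length), (v[kn]'h : ℤ) = ws ℓ y kn :=
    fun kn h => readVec_getElem ℓ hℓ y kn h
  refine ⟨?_, ?_, ?_⟩
  · intro k hk
    rcases lt_or_ge k 0 with hk0 | hk0
    · rw [ws_of_neg ℓ x hk0, ws_of_neg ℓ y hk0]
    · set kn := k.toNat with hkn
      have hkk : (kn : ℤ) = k := Int.toNat_of_nonneg hk0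
      have hkna : kn < a := by omega
      have h2 := H kn
      rw [List.getElem?_eraseIdx_of_lt (l := u) (i := a) (j := kn) hkna,
        List.getElem?_eraseIdx_of_lt (l := v) (i := b) (j := kn) (by omega)] at h2
      rw [List.getElem?_eq_getElem (l := u) (i := kn) (by rw [hul]; omega),
        List.getElem?_eq_getElem (l := v) (i := kn) (by rw [hvl]; omega)] at h2
      have h3 : (u[kn]'(by rw [hul]; omega) : ℤ) = (v[kn]'(by rw [hvl]; omega) : ℤ) := by
        exact_mod_cast congrArg (fun o => (o.getD 0 : ℕ)) h2
      rw [bridge_x kn (by rw [hul]; omega), bridge_y kn (by rw [hvl]; omega)] at h3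
      rwa [hkk] at h3
  · intro k hka hkb
    have hk0 : 0 ≤ k := le_trans (by positivity) hka
    set kn := k.toNat with hkn
    have hkk : (kn : ℤ) = k := Int.toNat_of_nonneg hk0
    have hkna : a ≤ kn := by omega
    have hknb : kn < b := by omega
    have h2 := H kn
    rw [List.getElem?_eraseIdx_of_ge (l := u) (i := a) (j := kn) hkna,
      List.getElem?_eraseIdx_of_lt (l := v) (i := b) (j := kn) hknb] at h2
    rw [List.getElem?_eq_getElem (l := u) (i := kn + 1) (by rw [hul]; omega),
      List.getElem?_eq_getElem (l := v) (i := kn) (by rw [hvl]; omega)] at h2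
    have h3 : (u[kn + 1]'(by rw [hul]; omega) : ℤ) = (v[kn]'(by rw [hvl]; omega) : ℤ) := by
      exact_mod_cast congrArg (fun o => (o.getD 0 : ℕ)) h2
    rw [bridge_x (kn + 1) (by rw [hul]; omega), bridge_y kn (by rw [hvl]; omega)] at h3
    push_cast at h3
    rw [hkk] at h3
    exact_mod_cast h3
  · intro k hk
    rcases le_or_gt (↑(u.length) : ℤ) k with hk0 | hk0
    · rw [ws_of_ge ℓ x (by push_cast at hk0 ⊢; omega), ws_of_ge ℓ y (by push_cast at hk0 ⊢; omega)]
    · have hbk : 0 ≤ k := by omega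
      set kn := k.toNat with hkn
      have hkk : (kn : ℤ) = k := Int.toNat_of_nonneg hbk
      have hknb : b < kn := by omega
      have hknm : kn < u.length := by rw [hul]; omega
      have h2 := H (kn - 1)
      rw [List.getElem?_eraseIdx_of_ge (l := u) (i := a) (j := (kn - 1)) (by omega),
        List.getElem?_eraseIdx_of_ge (l := v) (i := b) (j := (kn - 1)) (by omega)] at h2
      rw [show kn - 1 + 1 = kn by omega] at h2
      rw [List.getElem?_eq_getElem (l := u) (i := kn) hknm,
        List.getElem?_eq_getElem (l := v) (i := kn) (by rw [hvl]; omega)] at h2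
      have h3 : (u[kn]'hknm : ℤ) = (v[kn]'(by rw [hvl]; omega) : ℤ) := by
        exact_mod_cast congrArg (fun o => (o.getD 0 : ℕ)) h2
      rw [bridge_x kn hknm, bridge_y kn (by rw [hvl]; omega)] at h3
      rwa [hkk] at h3

/-- Two "forward" deletions give the same result. -/
lemma fflist {ℓ : ℕ} (hℓ : 2 ≤ ℓ) {x y : List Bool} (hlen : x.length = y.length) (hne : x ≠ y)
    {a b a' b' : ℕ} (hab : a ≤ b) (ha'b' : a' ≤ b')
    (hb : b < (readVec ℓ x).length) (hb' : b' < (readVec ℓ x).length)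
    (hz : (readVec ℓ x).eraseIdx a = (readVec ℓ y).eraseIdx b)
    (hz' : (readVec ℓ x).eraseIdx a' = (readVec ℓ y).eraseIdx b')
    (haa' : a ≤ a') :
    (readVec ℓ x).eraseIdx a = (readVec ℓ x).eraseIdx a' := by
  set u := readVec ℓ x with hu
  have hul : u.length = x.length + ℓ - 1 := length_readVec ℓ x
  have f1 := extract hℓ hlen hab hb hz
  have f2 := extract hℓ hlen ha'b' hb' hz'
  have hcore := ffcore hℓ hlen hne f1 f2
  have bridge_x : ∀ (kn : ℕ) (h : kn < u.length), (u[kn]'h : ℤ) = ws ℓ x kn :=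
    fun kn h => readVec_getElem ℓ hℓ x kn h
  have hconst : ∀ kn : ℕ, a ≤ kn → kn < a' → ∀ (h1 : kn + 1 < u.length) (h2 : kn < u.length),
      u[kn + 1]'h1 = u[kn]'h2 := by
    intro kn h1 h2 hb1 hb2
    have hcc := hcore kn (by omega) (by omega)
    have hb3 := bridge_x (kn + 1) hb1
    push_cast at hb3
    rw [← hb3, ← bridge_x kn hb2] at hcc
    exact_mod_cast hcc
  have hlen1 : (u.eraseIdx a).length = (u.eraseIdx a').length := by
    rw [List.length_eraseIdx_of_lt (by omega), List.length_eraseIdx_of_lt (by omega)]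
  apply List.ext_getElem hlen1
  intro kn hk1 hk2
  have hkm : kn < u.length - 1 := by
    rw [List.length_eraseIdx_of_lt (by omega)] at hk1
    exact hk1
  rcases lt_or_ge kn a with h | h
  · rw [List.getElem_eraseIdx_of_lt (l := u) (i := a) (j := kn) hk1 h,
      List.getElem_eraseIdx_of_lt (l := u) (i := a') (j := kn) hk2 (by omega)]
  · rcases lt_or_ge kn a' with h' | h'
    · rw [List.getElem_eraseIdx_of_ge (l := u) (i := a) (j := kn) hk1 h,
        List.getElem_eraseIdx_of_lt (l := u) (i := a') (j := kn) hk2 h']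
      exact hconst kn h h' (by omega) (by omega)
    · rw [List.getElem_eraseIdx_of_ge (l := u) (i := a) (j := kn) hk1 (by omega),
        List.getElem_eraseIdx_of_ge (l := u) (i := a') (j := kn) hk2 h']

/-- Key uniqueness: if `x ≠ y`, the deletion balls of the read vectors meet in
at most one point. -/
lemma key {ℓ n : ℕ} (hℓ : 2 ≤ ℓ) {x y : List Bool} (hx : x.length = n) (hy : y.length = n)
    (hne : x ≠ y) {z z' : List ℕ}
    (hz : z ∈ delBall (readVec ℓ x) ∩ delBall (readVec ℓ y))
    (hz' : z' ∈ delBall (readVec ℓ x) ∩ delBall (readVec ℓ y)) : z = z' := by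
  have hlen : x.length = y.length := by omega
  have hlu : (readVec ℓ x).length = (readVec ℓ y).length := by
    rw [length_readVec, length_readVec, hlen]
  obtain ⟨⟨i, hi, rfl⟩, ⟨j, hj, hzv⟩⟩ := hz
  obtain ⟨⟨i', hi', rfl⟩, ⟨j', hj', hzv'⟩⟩ := hz'
  rcases le_total i j with hij | hij <;> rcases le_total i' j' with hij' | hij'
  · -- both forward
    rcases le_total i i' with hii | hii
    · exact fflist hℓ hlen hne hij hij' (by omega) (by omega) hzv hzv' hii
    · exact (fflist hℓ hlen hne hij' hij (by omega) (by omega) hzv' hzv hii).symm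
  · -- forward / backward
    exact absurd (fb hℓ hlen hne (by exact_mod_cast hij) (by exact_mod_cast hij')
      (extract hℓ hlen hij (by omega) hzv)
      (extract hℓ hlen.symm hij' (by omega) hzv'.symm)) (by simp)
  · exact absurd (fb hℓ hlen.symm hne.symm (by exact_mod_cast hij) (by exact_mod_cast hij')
      (extract hℓ hlen.symm hij (by omega) hzv.symm)
      (extract hℓ hlen hij' (by omega) hzv')) (by simp)
  · -- both backward
    rcases le_total j j' with hjj | hjj
    · have h := fflist hℓ hlen.symm hne.symm hij hij' (by omega) (by omega)
        hzv.symm hzv'.symm hjj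
      exact hzv.trans (h.trans hzv'.symm)
    · have h := fflist hℓ hlen.symm hne.symm hij' hij (by omega) (by omega)
        hzv'.symm hzv.symm hjj
      exact hzv.trans (h.symm.trans hzv'.symm)

/-- For every `ℓ ≥ 2` and any two distinct `x, y ∈ {0,1}ⁿ`, the
single-deletion balls of their `ℓ`-read vectors intersect in at most one element:
`|D(Tr(x)) ∩ D(Tr(y))| ≤ 1`. Consequently, any `x ∈ {0,1}ⁿ` is uniquely determined by any
two distinct elements of `D(Tr(x))`. -/
theorem del_readVec_intersection_le_one (ℓ n : ℕ) (hℓ : 2 ≤ ℓ) :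
    (∀ x y : List Bool, x.length = n → y.length = n → x ≠ y →
      (delBall (readVec ℓ x) ∩ delBall (readVec ℓ y)).ncard ≤ 1) ∧
    (∀ x y : List Bool, x.length = n → y.length = n →
      ∀ R R' : List ℕ, R ≠ R' →
        R ∈ delBall (readVec ℓ x) → R' ∈ delBall (readVec ℓ x) →
        R ∈ delBall (readVec ℓ y) → R' ∈ delBall (readVec ℓ y) → x = y) := by
  constructor
  · intro x y hx hy hne
    have hsub : (delBall (readVec ℓ x) ∩ delBall (readVec ℓ y)).Subsingleton :=
      fun z hz z' hz' => key hℓ hx hy hne hz hz'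
    rcases hsub.eq_empty_or_singleton with h | ⟨z, h⟩
    · rw [h]; simp
    · rw [h]; simp
  · intro x y hx hy R R' hRR' h1 h2 h3 h4
    by_contra hne
    exact hRR' (key hℓ hx hy hne ⟨h1, h3⟩ ⟨h2, h4⟩)
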